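/- Let d ≥ 1, M > 0 and u ∈ ℝ^d with u ≠ 0. Then sup_{ε∈(0,1]} ∫₀¹ p^d_{ε+2Mt}(u) dt < ∞; more precisely, for every ε ∈ (0,1], ∫₀¹ p^d_{ε+2Mt}(u) dt ≤ (2π)^{-d/2} ε^{1−d/2} exp(−‖u‖²/(2(1+2M)ε)) + ((1+2M)/(2M))^{d/2} ∫₀¹ p^d_{(1+2M)t}(u) dt, and the right-hand side is bounded uniformly in ε ∈ (0,1] by a finite constant. -/

import Mathlib

open MeasureTheory Real intervalIntegral
open scoped NNReal

noncomputable section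

/-- The `d`-dimensional centered Gaussian density with variance parameter `t`. -/
def gaussDensD (d : ℕ) (t : ℝ) (x : EuclideanSpace ℝ (Fin d)) : ℝ :=
  (2 * π * t) ^ (-(d : ℝ) / 2) * Real.exp (-‖x‖ ^ 2 / (2 * t))

lemma exp_neg_div_le (n : ℕ) {c s : ℝ} (hc : 0 < c) (hs : 0 < s) :
    Real.exp (-(c / s)) ≤ (n.factorial : ℝ) * (s / c) ^ n := by
  have h1 : (c / s) ^ n / (n.factorial : ℝ) ≤ Real.exp (c / s) :=
    Real.pow_div_factorial_le_exp _ (by positivity) n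
  have h2 : (0 : ℝ) < (c / s) ^ n / (n.factorial : ℝ) := by positivity
  have h3 : Real.exp (-(c / s)) = (Real.exp (c / s))⁻¹ := Real.exp_neg _
  rw [h3]
  have h4 := inv_anti₀ h2 h1
  refine h4.trans_eq ?_
  rw [div_pow, div_pow]
  field_simp

lemma gauss_nonneg (d : ℕ) (u : EuclideanSpace ℝ (Fin d)) {s : ℝ} (hs : 0 ≤ s) :
    0 ≤ gaussDensD d s u :=
  mul_nonneg (Real.rpow_nonneg (by positivity) _) (Real.exp_pos _).le

lemma gauss_le (d : ℕ) (u : EuclideanSpace ℝ (Fin d)) (hu : u ≠ 0) {S s : ℝ}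
    (hs : 0 < s) (hsS : s ≤ S) :
    gaussDensD d s u ≤
      (2 * π) ^ (-(d : ℝ) / 2) * ((d.factorial : ℝ) / (‖u‖ ^ 2 / 2) ^ d) * S ^ ((d : ℝ) / 2) := by
  have hu' : 0 < ‖u‖ := norm_pos_iff.mpr hu
  set c : ℝ := ‖u‖ ^ 2 / 2 with hc_def
  have hc : 0 < c := by positivity
  have hS : 0 < S := hs.trans_le hsS
  have hrw : (2 * π * s) ^ (-(d : ℝ) / 2) = (2 * π) ^ (-(d : ℝ) / 2) * s ^ (-(d : ℝ) / 2) :=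
    Real.mul_rpow (by positivity) hs.le
  have hexp : Real.exp (-‖u‖ ^ 2 / (2 * s)) ≤ (d.factorial : ℝ) * (s / c) ^ d := by
    rw [show -‖u‖ ^ 2 / (2 * s) = -(c / s) by rw [hc_def]; field_simp]
    exact exp_neg_div_le d hc hs
  have h1 : s ^ (-(d : ℝ) / 2) * (s ^ d : ℝ) = s ^ ((d : ℝ) / 2) := by
    rw [← Real.rpow_natCast s d, ← Real.rpow_add hs,
      show -(d : ℝ) / 2 + d = (d : ℝ) / 2 by ring]
  have key : (2 * π) ^ (-(d : ℝ) / 2) * s ^ (-(d : ℝ) / 2) * ((d.factorial : ℝ) * (s / c) ^ d) =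
      ((2 * π) ^ (-(d : ℝ) / 2) * ((d.factorial : ℝ) / c ^ d)) * s ^ ((d : ℝ) / 2) := by
    rw [div_pow, ← h1]; ring
  calc gaussDensD d s u
      = (2 * π) ^ (-(d : ℝ) / 2) * s ^ (-(d : ℝ) / 2) * Real.exp (-‖u‖ ^ 2 / (2 * s)) := by
        rw [gaussDensD, hrw]
    _ ≤ (2 * π) ^ (-(d : ℝ) / 2) * s ^ (-(d : ℝ) / 2) * ((d.factorial : ℝ) * (s / c) ^ d) := by
        apply mul_le_mul_of_nonneg_left hexp
        positivity
    _ = ((2 * π) ^ (-(d : ℝ) / 2) * ((d.factorial : ℝ) / c ^ d)) * s ^ ((d : ℝ) / 2) := key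
    _ ≤ ((2 * π) ^ (-(d : ℝ) / 2) * ((d.factorial : ℝ) / c ^ d)) * S ^ ((d : ℝ) / 2) := by
        apply mul_le_mul_of_nonneg_left (Real.rpow_le_rpow hs.le hsS (by positivity))
        positivity

lemma gauss_contOn (d : ℕ) (u : EuclideanSpace ℝ (Fin d)) :
    ContinuousOn (fun s : ℝ => gaussDensD d s u) (Set.Ioi 0) := by
  intro s hs
  have hs' : (0 : ℝ) < s := hs
  apply ContinuousAt.continuousWithinAt
  have h1 : ContinuousAt (fun s : ℝ => (2 * π * s) ^ (-(d : ℝ) / 2)) s := by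
    have h := Real.continuousAt_rpow_const (2 * π * s) (-(d : ℝ) / 2)
      (Or.inl (by positivity))
    exact h.comp (by fun_prop)
  have h2 : ContinuousAt (fun s : ℝ => Real.exp (-‖u‖ ^ 2 / (2 * s))) s := by
    apply Real.continuous_exp.continuousAt.comp
    exact ContinuousAt.div (by fun_prop) (by fun_prop) (by positivity)
  exact h1.mul h2

lemma gauss_intOn (d : ℕ) (u : EuclideanSpace ℝ (Fin d)) (hu : u ≠ 0) {a : ℝ} (ha : 0 < a) :
    IntervalIntegrable (fun t : ℝ => gaussDensD d (a * t) u) volume 0 1 := by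
  rw [intervalIntegrable_iff_integrableOn_Ioc_of_le zero_le_one]
  have hcont : ContinuousOn (fun t : ℝ => gaussDensD d (a * t) u) (Set.Ioc 0 1) := by
    apply (gauss_contOn d u).comp (Continuous.continuousOn (by fun_prop))
    intro t ht
    exact Set.mem_Ioi.mpr (by nlinarith [ht.1])
  refine ⟨hcont.aestronglyMeasurable measurableSet_Ioc,
    HasFiniteIntegral.restrict_of_bounded (C :=
      (2 * π) ^ (-(d : ℝ) / 2) * ((d.factorial : ℝ) / (‖u‖ ^ 2 / 2) ^ d) * a ^ ((d : ℝ) / 2))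
      measure_Ioc_lt_top ?_⟩
  filter_upwards [ae_restrict_mem measurableSet_Ioc] with t ht
  rw [Real.norm_eq_abs, abs_of_nonneg (gauss_nonneg d u (by nlinarith [ht.1]))]
  exact gauss_le d u hu (by nlinarith [ht.1]) (by nlinarith [ht.1, ht.2])

/-- for `d ≥ 1`, `M > 0` and `u ≠ 0`, the integrals
`∫₀¹ p^d_{ε+2Mt}(u) dt` are bounded uniformly in `ε ∈ (0,1]`, with the explicit bound
stated in the paper. -/
theorem gaussian_time_integral_uniform_bound
    (d : ℕ) (hd : 1 ≤ d) (M : ℝ) (hM : 0 < M)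
    (u : EuclideanSpace ℝ (Fin d)) (hu : u ≠ 0) :
    (∀ ε : ℝ, 0 < ε → ε ≤ 1 →
      ∫ t in (0 : ℝ)..1, gaussDensD d (ε + 2 * M * t) u ≤
        (2 * π) ^ (-(d : ℝ) / 2) * ε ^ (1 - (d : ℝ) / 2) *
            Real.exp (-‖u‖ ^ 2 / (2 * (1 + 2 * M) * ε)) +
          ((1 + 2 * M) / (2 * M)) ^ ((d : ℝ) / 2) *
            ∫ t in (0 : ℝ)..1, gaussDensD d ((1 + 2 * M) * t) u) ∧
    ∃ κ : ℝ, ∀ ε : ℝ, 0 < ε → ε ≤ 1 →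
      ((2 * π) ^ (-(d : ℝ) / 2) * ε ^ (1 - (d : ℝ) / 2) *
            Real.exp (-‖u‖ ^ 2 / (2 * (1 + 2 * M) * ε)) +
          ((1 + 2 * M) / (2 * M)) ^ ((d : ℝ) / 2) *
            ∫ t in (0 : ℝ)..1, gaussDensD d ((1 + 2 * M) * t) u) ≤ κ := by
  have hπ := Real.pi_pos
  have hu' : 0 < ‖u‖ := norm_pos_iff.mpr hu
  have hdneg : -(d : ℝ) / 2 ≤ 0 := by
    rw [neg_div]; exact neg_nonpos.2 (by positivity)
  constructor
  · intro ε hε hε1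
    have hgc : ContinuousOn (fun t : ℝ => gaussDensD d (ε + 2 * M * t) u) (Set.Icc 0 1) := by
      apply (gauss_contOn d u).comp (Continuous.continuousOn (by fun_prop))
      intro t ht
      simp only [Set.mem_Ioi]
      nlinarith [ht.1]
    have hg0ε : IntervalIntegrable (fun t : ℝ => gaussDensD d (ε + 2 * M * t) u) volume 0 ε :=
      (hgc.mono (by rw [Set.uIcc_of_le hε.le]; exact Set.Icc_subset_Icc le_rfl hε1)).intervalIntegrable
    have hgε1 : IntervalIntegrable (fun t : ℝ => gaussDensD d (ε + 2 * M * t) u) volume ε 1 :=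
      (hgc.mono (by rw [Set.uIcc_of_le hε1]; exact Set.Icc_subset_Icc hε.le le_rfl)).intervalIntegrable
    have hhint : IntervalIntegrable (fun t : ℝ => gaussDensD d ((1 + 2 * M) * t) u) volume 0 1 :=
      gauss_intOn d u hu (by linarith)
    have hsplit : (∫ t in (0 : ℝ)..1, gaussDensD d (ε + 2 * M * t) u) =
        (∫ t in (0 : ℝ)..ε, gaussDensD d (ε + 2 * M * t) u) +
          ∫ t in ε..1, gaussDensD d (ε + 2 * M * t) u :=
      (integral_add_adjacent_intervals hg0ε hgε1).symm
    have hA : (∫ t in (0 : ℝ)..ε, gaussDensD d (ε + 2 * M * t) u) ≤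
        (2 * π) ^ (-(d : ℝ) / 2) * ε ^ (1 - (d : ℝ) / 2) *
          Real.exp (-‖u‖ ^ 2 / (2 * (1 + 2 * M) * ε)) := by
      have hpt : ∀ t ∈ Set.Icc (0 : ℝ) ε, gaussDensD d (ε + 2 * M * t) u ≤
          (2 * π * ε) ^ (-(d : ℝ) / 2) * Real.exp (-‖u‖ ^ 2 / (2 * (1 + 2 * M) * ε)) := by
        intro t ht
        have hs : (0 : ℝ) < ε + 2 * M * t := by nlinarith [ht.1]
        have hb1 : (2 * π * (ε + 2 * M * t)) ^ (-(d : ℝ) / 2) ≤ (2 * π * ε) ^ (-(d : ℝ) / 2) :=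
          Real.rpow_le_rpow_of_nonpos (by positivity)
            (by nlinarith [mul_nonneg (mul_nonneg hπ.le hM.le) ht.1]) hdneg
        have hb2 : Real.exp (-‖u‖ ^ 2 / (2 * (ε + 2 * M * t))) ≤
            Real.exp (-‖u‖ ^ 2 / (2 * (1 + 2 * M) * ε)) := by
          rw [Real.exp_le_exp, neg_div, neg_div]
          apply neg_le_neg
          exact div_le_div_of_nonneg_left (by positivity) (by positivity)
            (by nlinarith [ht.2, mul_nonneg hM.le ht.1])
        exact mul_le_mul hb1 hb2 (Real.exp_pos _).le (Real.rpow_nonneg (by positivity) _)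
      calc (∫ t in (0 : ℝ)..ε, gaussDensD d (ε + 2 * M * t) u)
          ≤ ∫ _t in (0 : ℝ)..ε,
              (2 * π * ε) ^ (-(d : ℝ) / 2) * Real.exp (-‖u‖ ^ 2 / (2 * (1 + 2 * M) * ε)) :=
            integral_mono_on hε.le hg0ε intervalIntegrable_const hpt
        _ = ε * ((2 * π * ε) ^ (-(d : ℝ) / 2) * Real.exp (-‖u‖ ^ 2 / (2 * (1 + 2 * M) * ε))) := by
            simp
            ring
        _ = (2 * π) ^ (-(d : ℝ) / 2) * ε ^ (1 - (d : ℝ) / 2) *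
              Real.exp (-‖u‖ ^ 2 / (2 * (1 + 2 * M) * ε)) := by
            rw [Real.mul_rpow (by positivity) hε.le,
              show (1 : ℝ) - (d : ℝ) / 2 = 1 + -(d : ℝ) / 2 by ring,
              Real.rpow_add hε, Real.rpow_one]
            ring
    have hB : (∫ t in ε..1, gaussDensD d (ε + 2 * M * t) u) ≤
        ((1 + 2 * M) / (2 * M)) ^ ((d : ℝ) / 2) *
          ∫ t in (0 : ℝ)..1, gaussDensD d ((1 + 2 * M) * t) u := by
      have hpt : ∀ t ∈ Set.Icc ε 1, gaussDensD d (ε + 2 * M * t) u ≤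
          ((1 + 2 * M) / (2 * M)) ^ ((d : ℝ) / 2) * gaussDensD d ((1 + 2 * M) * t) u := by
        intro t ht
        have ht0 : 0 < t := lt_of_lt_of_le hε ht.1
        have hb1 : (2 * π * (ε + 2 * M * t)) ^ (-(d : ℝ) / 2) ≤
            (2 * π * (2 * M * t)) ^ (-(d : ℝ) / 2) :=
          Real.rpow_le_rpow_of_nonpos (by positivity)
            (by nlinarith [mul_pos (mul_pos two_pos hπ) hε]) hdneg
        have hb2 : Real.exp (-‖u‖ ^ 2 / (2 * (ε + 2 * M * t))) ≤
            Real.exp (-‖u‖ ^ 2 / (2 * ((1 + 2 * M) * t))) := by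
          rw [Real.exp_le_exp, neg_div, neg_div]
          apply neg_le_neg
          exact div_le_div_of_nonneg_left (by positivity) (by positivity)
            (by nlinarith [ht.1])
        have hfactor : (2 * π * (2 * M * t)) ^ (-(d : ℝ) / 2) =
            ((1 + 2 * M) / (2 * M)) ^ ((d : ℝ) / 2) *
              (2 * π * ((1 + 2 * M) * t)) ^ (-(d : ℝ) / 2) := by
          have hsplit2 : 2 * π * (2 * M * t) =
              (2 * π * ((1 + 2 * M) * t)) * (2 * M / (1 + 2 * M)) := by
            field_simp
          rw [hsplit2, Real.mul_rpow (by positivity) (by positivity)]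
          have hinv : (2 * M / (1 + 2 * M)) ^ (-(d : ℝ) / 2) =
              ((1 + 2 * M) / (2 * M)) ^ ((d : ℝ) / 2) := by
            rw [neg_div, Real.rpow_neg (by positivity), ← Real.inv_rpow (by positivity), inv_div]
          rw [hinv]; ring
        calc gaussDensD d (ε + 2 * M * t) u
            = (2 * π * (ε + 2 * M * t)) ^ (-(d : ℝ) / 2) *
                Real.exp (-‖u‖ ^ 2 / (2 * (ε + 2 * M * t))) := rfl
          _ ≤ (2 * π * (2 * M * t)) ^ (-(d : ℝ) / 2) *
                Real.exp (-‖u‖ ^ 2 / (2 * ((1 + 2 * M) * t))) :=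
              mul_le_mul hb1 hb2 (Real.exp_pos _).le (Real.rpow_nonneg (by positivity) _)
          _ = ((1 + 2 * M) / (2 * M)) ^ ((d : ℝ) / 2) * gaussDensD d ((1 + 2 * M) * t) u := by
              rw [hfactor, gaussDensD]; ring
      calc (∫ t in ε..1, gaussDensD d (ε + 2 * M * t) u)
          ≤ ∫ t in ε..1,
              ((1 + 2 * M) / (2 * M)) ^ ((d : ℝ) / 2) * gaussDensD d ((1 + 2 * M) * t) u :=
            integral_mono_on hε1 hgε1
              ((hhint.mono_set
                  (by rw [Set.uIcc_of_le hε1, Set.uIcc_of_le zero_le_one]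
                      exact Set.Icc_subset_Icc hε.le le_rfl)).const_mul _) hpt
        _ = ((1 + 2 * M) / (2 * M)) ^ ((d : ℝ) / 2) *
              ∫ t in ε..1, gaussDensD d ((1 + 2 * M) * t) u := integral_const_mul _ _
        _ ≤ ((1 + 2 * M) / (2 * M)) ^ ((d : ℝ) / 2) *
              ∫ t in (0 : ℝ)..1, gaussDensD d ((1 + 2 * M) * t) u := by
            apply mul_le_mul_of_nonneg_left _ (Real.rpow_nonneg (by positivity) _)
            apply integral_mono_interval hε.le hε1 le_rfl _ hhint
            filter_upwards [ae_restrict_mem measurableSet_Ioc] with t ht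
            exact gauss_nonneg d u (by nlinarith [ht.1.le])
    rw [hsplit]
    exact add_le_add hA hB
  · have hc : (0 : ℝ) < ‖u‖ ^ 2 / (2 * (1 + 2 * M)) := by positivity
    refine ⟨(2 * π) ^ (-(d : ℝ) / 2) * ((d.factorial : ℝ) / (‖u‖ ^ 2 / (2 * (1 + 2 * M))) ^ d) +
      ((1 + 2 * M) / (2 * M)) ^ ((d : ℝ) / 2) *
        ∫ t in (0 : ℝ)..1, gaussDensD d ((1 + 2 * M) * t) u, ?_⟩
    intro ε hε hε1
    apply add_le_add _ le_rfl
    have hexp : Real.exp (-‖u‖ ^ 2 / (2 * (1 + 2 * M) * ε)) ≤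
        (d.factorial : ℝ) * (ε / (‖u‖ ^ 2 / (2 * (1 + 2 * M)))) ^ d := by
      rw [show -‖u‖ ^ 2 / (2 * (1 + 2 * M) * ε) = -((‖u‖ ^ 2 / (2 * (1 + 2 * M))) / ε) by
        field_simp]
      exact exp_neg_div_le d hc hε
    have h1 : ε ^ (1 - (d : ℝ) / 2) * (ε ^ d : ℝ) = ε ^ (1 + (d : ℝ) / 2) := by
      rw [← Real.rpow_natCast ε d, ← Real.rpow_add hε,
        show (1 - (d : ℝ) / 2) + d = 1 + (d : ℝ) / 2 by ring]
    calc (2 * π) ^ (-(d : ℝ) / 2) * ε ^ (1 - (d : ℝ) / 2) *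
          Real.exp (-‖u‖ ^ 2 / (2 * (1 + 2 * M) * ε))
        ≤ (2 * π) ^ (-(d : ℝ) / 2) * ε ^ (1 - (d : ℝ) / 2) *
            ((d.factorial : ℝ) * (ε / (‖u‖ ^ 2 / (2 * (1 + 2 * M)))) ^ d) :=
          mul_le_mul_of_nonneg_left hexp (by positivity)
      _ = ((2 * π) ^ (-(d : ℝ) / 2) *
            ((d.factorial : ℝ) / (‖u‖ ^ 2 / (2 * (1 + 2 * M))) ^ d)) * ε ^ (1 + (d : ℝ) / 2) := by
          rw [div_pow, ← h1]; ring
      _ ≤ ((2 * π) ^ (-(d : ℝ) / 2) *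
            ((d.factorial : ℝ) / (‖u‖ ^ 2 / (2 * (1 + 2 * M))) ^ d)) * 1 := by
          apply mul_le_mul_of_nonneg_left (Real.rpow_le_one hε.le hε1 (by positivity))
          positivity
      _ = _ := by rw [mul_one]
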